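/- Let K be a real algebraic number field of degree d = s + 2t, where s is the number of real embeddings and 2t the number of non-real embeddings of K into ℂ. Let θ_1 < θ_2 < θ_3 < ... be the elements of ℘_K listed in increasing order, and let C_K := {θ_{n+1} - θ_n : n ∈ ℕ} be the set of positive differences of consecutive elements of ℘_K. Then C_K has at least 2^{s+t-1} elements. -/

import Mathlib

open IntermediateField

/-- The "identity" embedding of a real number field `K ⊆ ℝ` into `ℂ`. -/
noncomputable def iotaK (K : IntermediateField ℚ ℝ) : ↥K →+* ℂ :=
  Complex.ofRealHom.comp (algebraMap ↥K ℝ)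

/-- `℘_K`: the set of Pisot numbers `θ ∈ K` with `ℚ(θ) = K`. -/
def pisotGen (K : IntermediateField ℚ ℝ) : Set ↥K :=
  {θ | IsIntegral ℤ θ ∧ 1 < (θ : ℝ) ∧
    IntermediateField.adjoin ℚ ({θ} : Set ↥K) = ⊤ ∧
    ∀ σ : ↥K →+* ℂ, σ ≠ iotaK K → ‖σ θ‖ < 1}

/-- `C_K`: the set of differences of consecutive elements of `℘_K`, i.e. differences
`θ' - θ` of elements `θ < θ'` of `℘_K` with no element of `℘_K` strictly between them. -/
def CK (K : IntermediateField ℚ ℝ) : Set ↥K :=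
  {c | ∃ θ ∈ pisotGen K, ∃ θ' ∈ pisotGen K, (θ : ℝ) < (θ' : ℝ) ∧ c = θ' - θ ∧
    ∀ η ∈ pisotGen K, ¬((θ : ℝ) < (η : ℝ) ∧ (η : ℝ) < (θ' : ℝ))}


open NumberField NumberField.InfinitePlace

section aux

variable (K : IntermediateField ℚ ℝ)

lemma iotaK_apply (x : ↥K) : iotaK K x = ((x : ℝ) : ℂ) := rfl

lemma iotaK_isReal : ComplexEmbedding.IsReal (iotaK K) := by
  rw [ComplexEmbedding.isReal_iff]
  ext x
  simp [ComplexEmbedding.conjugate_coe_eq, iotaK_apply]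

/-- The infinite place of the identity embedding. -/
noncomputable def widK : InfinitePlace ↥K := InfinitePlace.mk (iotaK K)

lemma widK_embedding : (widK K).embedding = iotaK K :=
  embedding_mk_eq_of_isReal (iotaK_isReal K)

lemma widK_isReal : (widK K).IsReal := by
  rw [isReal_iff, widK_embedding]; exact iotaK_isReal K

lemma widK_apply (x : ↥K) : widK K x = |(x : ℝ)| := by
  rw [widK, InfinitePlace.apply, iotaK_apply, Complex.norm_real, Real.norm_eq_abs]

lemma place_ne_widK {σ : ↥K →+* ℂ} (h : σ ≠ iotaK K) : InfinitePlace.mk σ ≠ widK K := by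
  intro hc
  rw [widK] at hc
  rcases mk_eq_iff.mp hc with h1 | h1
  · exact h h1
  · apply h
    have h2 := congrArg (ComplexEmbedding.conjugate) h1
    rw [ComplexEmbedding.isReal_iff.mp (iotaK_isReal K)] at h2
    rw [← h2]
    ext x
    simp [ComplexEmbedding.conjugate_coe_eq]

lemma embedding_ne_iotaK {w : InfinitePlace ↥K} (h : w ≠ widK K) : w.embedding ≠ iotaK K := by
  intro hc
  exact h (by rw [← mk_embedding w, hc]; rfl)

lemma abs_lt_iff_places (θ : ↥K) :
    (∀ σ : ↥K →+* ℂ, σ ≠ iotaK K → ‖σ θ‖ < 1) ↔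
      (∀ w : InfinitePlace ↥K, w ≠ widK K → w θ < 1) := by
  constructor
  · intro h w hw
    rw [← norm_embedding_eq]
    exact h _ (embedding_ne_iotaK K hw)
  · intro h σ hσ
    have := h (InfinitePlace.mk σ) (place_ne_widK K hσ)
    rwa [InfinitePlace.apply] at this

end aux

set_option maxHeartbeats 800000
section gen

variable (K : IntermediateField ℚ ℝ) [NumberField ↥K]

set_option synthInstance.maxHeartbeats 1000000 in
set_option maxHeartbeats 1600000 in
lemma adjoin_eq_top_of_pisot (θ : ↥K) (h1 : 1 < (θ : ℝ))
    (hσ : ∀ σ : ↥K →+* ℂ, σ ≠ iotaK K → ‖σ θ‖ < 1) :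
    IntermediateField.adjoin ℚ ({θ} : Set ↥K) = ⊤ := by
  by_contra hne
  set L := IntermediateField.adjoin ℚ ({θ} : Set ↥K) with hL
  haveI : FiniteDimensional ↥L ↥K := FiniteDimensional.right ℚ ↥L ↥K
  letI : Algebra ↥L ℂ := ((iotaK K).comp (algebraMap ↥L ↥K)).toAlgebra
  have hcard : Fintype.card (↥K →ₐ[↥L] ℂ) = Module.finrank ↥L ↥K := AlgHom.card ↥L ↥K ℂ
  have h2 : 1 < Module.finrank ↥L ↥K := by
    rcases Nat.lt_or_ge (Module.finrank ↥L ↥K) 2 with h | h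
    · exfalso
      interval_cases h' : (Module.finrank ↥L ↥K)
      · exact (Module.finrank_pos (R := ↥L) (M := ↥K)).ne' h'
      · apply hne
        rw [← top_le_iff]
        intro x _
        have hbot : (⊥ : Subalgebra ↥L ↥K) = ⊤ :=
          Subalgebra.bot_eq_top_of_finrank_eq_one h'
        have : x ∈ (⊥ : Subalgebra ↥L ↥K) := by rw [hbot]; trivial
        obtain ⟨y, hy⟩ := Algebra.mem_bot.mp this
        rw [← hy]
        exact y.2
    · exact h
  rw [← hcard] at h2
  obtain ⟨ψ₁, ψ₂, hψne⟩ := Fintype.exists_pair_of_one_lt_card h2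
  have hkey : ∀ ψ : ↥K →ₐ[↥L] ℂ, (ψ : ↥K →+* ℂ) ≠ iotaK K → False := by
    intro ψ hψ
    have hθL : θ ∈ L := IntermediateField.mem_adjoin_simple_self ℚ θ
    have hcomm : ψ θ = iotaK K θ := by
      have := ψ.commutes ⟨θ, hθL⟩
      have halg : algebraMap ↥L ↥K ⟨θ, hθL⟩ = θ := rfl
      rw [halg] at this
      rw [this, RingHom.algebraMap_toAlgebra]
      rfl
    have := hσ (ψ : ↥K →+* ℂ) hψ
    rw [show (ψ : ↥K →+* ℂ) θ = ψ θ from rfl, hcomm, iotaK_apply, Complex.norm_real, Real.norm_eq_abs] at this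
    have : (1:ℝ) < 1 := lt_trans (lt_of_lt_of_le h1 (le_abs_self _)) this
    exact lt_irrefl _ this
  have : (ψ₁ : ↥K →+* ℂ) = iotaK K := by
    by_contra h; exact hkey ψ₁ h
  have h2' : (ψ₂ : ↥K →+* ℂ) = iotaK K := by
    by_contra h; exact hkey ψ₂ h
  apply hψne
  apply AlgHom.coe_ringHom_injective
  rw [this, h2']

end gen

section approx

open NumberField.mixedEmbedding Filter Bornology
open scoped Classical

variable (K : IntermediateField ℚ ℝ) [NumberField ↥K]

/-- Covering radius of the lattice of integers in the mixed space. -/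
lemma exists_covering :
    ∃ R : ℝ, 1 ≤ R ∧ ∀ x : mixedSpace ↥K, ∃ a : 𝓞 ↥K,
      ‖x - mixedEmbedding ↥K (algebraMap (𝓞 ↥K) ↥K a)‖ ≤ R := by
  classical
  set b := latticeBasis ↥K
  obtain ⟨R₀, hR₀⟩ := (ZSpan.fundamentalDomain_isBounded b).subset_closedBall 0
  refine ⟨max R₀ 1, le_max_right _ _, fun x => ?_⟩
  obtain ⟨v, hv⟩ := (ZSpan.exist_unique_vadd_mem_fundamentalDomain b x).exists
  have hmem : (-(v : mixedSpace ↥K)) ∈ mixedEmbedding.integerLattice ↥K := by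
    rw [← mem_span_latticeBasis]
    exact neg_mem v.2
  obtain ⟨a, ha⟩ := hmem
  refine ⟨a, ?_⟩
  have : (v : mixedSpace ↥K) + x ∈ Metric.closedBall (0 : mixedSpace ↥K) R₀ := hR₀ hv
  rw [Metric.mem_closedBall, dist_zero_right] at this
  have ha' : mixedEmbedding ↥K (algebraMap (𝓞 ↥K) ↥K a) = -(v : mixedSpace ↥K) := ha
  rw [ha', sub_neg_eq_add, add_comm]
  exact this.trans (le_max_left _ _)

lemma normAtPlace_le_norm (w : InfinitePlace ↥K) (x : mixedSpace ↥K) :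
    normAtPlace w x ≤ ‖x‖ := by
  rw [norm_eq_sup'_normAtPlace]
  exact Finset.le_sup' (fun w => normAtPlace w x) (Finset.mem_univ w)

/-- Skewed approximation: integral elements approximating any point of the mixed space
to precision `ρ` at every place except `widK`, with uniformly bounded error at `widK`. -/
lemma exists_skew_approx {ρ : ℝ} (hρ : 0 < ρ) :
    ∃ D : ℝ, 1 ≤ D ∧ ∀ y : mixedSpace ↥K, ∃ θ : ↥K, IsIntegral ℤ θ ∧
      (∀ w : InfinitePlace ↥K, w ≠ widK K → normAtPlace w (mixedEmbedding ↥K θ - y) ≤ ρ) ∧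
      normAtPlace (widK K) (mixedEmbedding ↥K θ - y) ≤ D := by
  classical
  obtain ⟨R, hR1, hR⟩ := exists_covering K
  obtain ⟨u, hu⟩ := Units.dirichletUnitTheorem.exists_unit ↥K (widK K)
  -- find n such that all places ≠ widK of u^n are ≤ ρ / R
  have hsmall : ∀ w : InfinitePlace ↥K, w ≠ widK K →
      Tendsto (fun n : ℕ => (w (algebraMap (𝓞 ↥K) ↥K u))^n) atTop (nhds 0) := by
    intro w hw
    apply tendsto_pow_atTop_nhds_zero_of_lt_one (apply_nonneg _ _)
    have := hu w hw
    by_contra hge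
    push_neg at hge
    have : (0:ℝ) ≤ Real.log (w (algebraMap (𝓞 ↥K) ↥K u)) := Real.log_nonneg hge
    linarith [hu w hw]
  have hev : ∀ᶠ n : ℕ in atTop, ∀ w ∈ Finset.univ.filter (fun w => w ≠ widK K),
      (w (algebraMap (𝓞 ↥K) ↥K u))^n ≤ ρ / R := by
    apply (Finset.eventually_all _).mpr
    intro w hw
    have := (hsmall w (Finset.mem_filter.mp hw).2).eventually
      (eventually_le_nhds (by positivity : (0:ℝ) < ρ / R))
    exact this
  obtain ⟨n, hn⟩ := hev.exists
  set U : (𝓞 ↥K)ˣ := u ^ n with hU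
  set υ : ↥K := algebraMap (𝓞 ↥K) ↥K (U : 𝓞 ↥K) with hυ
  set υ' : ↥K := algebraMap (𝓞 ↥K) ↥K ((U⁻¹ : (𝓞 ↥K)ˣ) : 𝓞 ↥K) with hυ'
  have hmul : υ * υ' = 1 := by
    rw [hυ, hυ', ← map_mul, Units.mul_inv, map_one]
  refine ⟨max 1 (widK K υ * R), le_max_left _ _, fun y => ?_⟩
  obtain ⟨a, ha⟩ := hR (mixedEmbedding ↥K υ' * y)
  refine ⟨υ * algebraMap (𝓞 ↥K) ↥K a, ?_, ?_, ?_⟩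
  · have : υ * algebraMap (𝓞 ↥K) ↥K a = algebraMap (𝓞 ↥K) ↥K ((U : 𝓞 ↥K) * a) := by
      rw [map_mul]
    rw [this]
    exact RingOfIntegers.isIntegral_coe _
  · intro w hw
    have h0 : mixedEmbedding ↥K υ * mixedEmbedding ↥K υ' = 1 := by
      rw [← map_mul, hmul, map_one]
    have key : mixedEmbedding ↥K (υ * algebraMap (𝓞 ↥K) ↥K a) - y =
        mixedEmbedding ↥K υ * (mixedEmbedding ↥K (algebraMap (𝓞 ↥K) ↥K a) -
          mixedEmbedding ↥K υ' * y) := by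
      rw [map_mul, mul_sub, ← mul_assoc, h0, one_mul]
    have h1 : normAtPlace w (mixedEmbedding ↥K υ) = w υ := normAtPlace_apply w υ
    rw [key, map_mul, h1]
    have h2 : normAtPlace w (mixedEmbedding ↥K (algebraMap (𝓞 ↥K) ↥K a) -
        mixedEmbedding ↥K υ' * y) ≤ R := by
      have := normAtPlace_le_norm K w (mixedEmbedding ↥K (algebraMap (𝓞 ↥K) ↥K a) -
        mixedEmbedding ↥K υ' * y)
      refine this.trans ?_
      rw [← norm_neg, neg_sub]
      exact ha
    have h3 : w υ ≤ ρ / R := by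
      have : w υ = (w (algebraMap (𝓞 ↥K) ↥K u))^n := by
        rw [hυ, hU, Units.val_pow_eq_pow_val, map_pow, map_pow]
      rw [this]
      exact hn w (Finset.mem_filter.mpr ⟨Finset.mem_univ _, hw⟩)
    calc w υ * normAtPlace w _ ≤ (ρ / R) * R := by
          apply mul_le_mul h3 h2 (normAtPlace_nonneg _ _) (by positivity)
      _ = ρ := by field_simp
  · have key : mixedEmbedding ↥K (υ * algebraMap (𝓞 ↥K) ↥K a) - y =
        mixedEmbedding ↥K υ * (mixedEmbedding ↥K (algebraMap (𝓞 ↥K) ↥K a) -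
          mixedEmbedding ↥K υ' * y) := by
      have h0 : mixedEmbedding ↥K υ * mixedEmbedding ↥K υ' = 1 := by
        rw [← map_mul, hmul, map_one]
      rw [map_mul, mul_sub, ← mul_assoc, h0, one_mul]
    rw [key, map_mul]
    have h2 : normAtPlace (widK K) (mixedEmbedding ↥K (algebraMap (𝓞 ↥K) ↥K a) -
        mixedEmbedding ↥K υ' * y) ≤ R := by
      refine (normAtPlace_le_norm K _ _).trans ?_
      rw [← norm_neg, neg_sub]
      exact ha
    rw [normAtPlace_apply]
    refine le_trans ?_ (le_max_right 1 _)
    exact mul_le_mul_of_nonneg_left h2 (apply_nonneg _ _)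

end approx


section pisotnear

open NumberField.mixedEmbedding
open scoped Classical

variable (K : IntermediateField ℚ ℝ) [NumberField ↥K]

lemma mixed_fst_widK (θ : ↥K) :
    (mixedEmbedding ↥K θ).1 ⟨widK K, widK_isReal K⟩ = (θ : ℝ) := by
  have h := mixedEmbedding_apply_isReal (K := ↥K) θ ⟨widK K, widK_isReal K⟩
  apply Complex.ofReal_injective
  rw [h, embedding_of_isReal_apply]
  show (widK K).embedding θ = _
  rw [widK_embedding, iotaK_apply]

lemma mem_pisotGen_of (θ : ↥K) (hi : IsIntegral ℤ θ) (h1 : 1 < (θ : ℝ))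
    (hw : ∀ w : InfinitePlace ↥K, w ≠ widK K → w θ < 1) : θ ∈ pisotGen K :=
  ⟨hi, h1, adjoin_eq_top_of_pisot K θ h1 ((abs_lt_iff_places K θ).mpr hw),
    (abs_lt_iff_places K θ).mpr hw⟩

lemma pisotGen_places {θ : ↥K} (h : θ ∈ pisotGen K) :
    ∀ w : InfinitePlace ↥K, w ≠ widK K → w θ < 1 :=
  (abs_lt_iff_places K θ).mp h.2.2.2

lemma exists_pisot_near {ρ : ℝ} (hρ0 : 0 < ρ) (hρ : ρ ≤ 1/4) :
    ∃ D : ℝ, 1 ≤ D ∧ ∀ y : mixedSpace ↥K,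
      (∀ w : InfinitePlace ↥K, w ≠ widK K → normAtPlace w y ≤ 1 - 2*ρ) →
      D + 2 ≤ y.1 ⟨widK K, widK_isReal K⟩ →
      ∃ θ ∈ pisotGen K, |(θ : ℝ) - y.1 ⟨widK K, widK_isReal K⟩| ≤ D ∧
        ∀ w : InfinitePlace ↥K, w ≠ widK K →
          normAtPlace w (mixedEmbedding ↥K θ - y) ≤ ρ := by
  obtain ⟨D, hD1, hD⟩ := exists_skew_approx K hρ0
  refine ⟨D, hD1, fun y hy hyid => ?_⟩
  obtain ⟨θ, hint, hw, hid⟩ := hD y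
  have hdist : |(θ : ℝ) - y.1 ⟨widK K, widK_isReal K⟩| ≤ D := by
    have h1 := normAtPlace_apply_of_isReal (widK_isReal K) (mixedEmbedding ↥K θ - y)
    rw [h1] at hid
    have h2 : (mixedEmbedding ↥K θ - y).1 ⟨widK K, widK_isReal K⟩ =
        (θ : ℝ) - y.1 ⟨widK K, widK_isReal K⟩ := by
      rw [Prod.fst_sub, Pi.sub_apply, mixed_fst_widK]
    rw [h2] at hid
    exact hid
  have h1 : 1 < (θ : ℝ) := by
    have := abs_le.mp hdist
    nlinarith [this.1, this.2]
  refine ⟨θ, mem_pisotGen_of K θ hint h1 (fun w hwid => ?_), hdist, hw⟩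
  have h3 : w θ = normAtPlace w (mixedEmbedding ↥K θ) := (normAtPlace_apply w θ).symm
  have h4 := normAtPlace_add_le w (mixedEmbedding ↥K θ - y) y
  rw [sub_add_cancel] at h4
  have := hy w hwid
  have := hw w hwid
  rw [h3]
  linarith

lemma exists_succ_bound :
    ∃ B : ℝ, 1 ≤ B ∧ ∀ θ ∈ pisotGen K, ∃ θ' ∈ pisotGen K,
      (θ : ℝ) < (θ' : ℝ) ∧ (θ' : ℝ) ≤ (θ : ℝ) + B := by
  obtain ⟨D, hD1, hD⟩ := exists_pisot_near K (by norm_num : (0:ℝ) < 1/4) (le_refl _)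
  refine ⟨2*D + 2, by linarith, fun θ hθ => ?_⟩
  set y : mixedSpace ↥K :=
    (fun w => if (w : InfinitePlace ↥K) = widK K then (θ : ℝ) + D + 2
      else (mixedEmbedding ↥K θ).1 w / 2,
     fun w => (mixedEmbedding ↥K θ).2 w / 2) with hy
  have hyid : y.1 ⟨widK K, widK_isReal K⟩ = (θ : ℝ) + D + 2 := by
    simp only [hy, if_pos rfl]
    rw [if_true]
  have hcond : ∀ w : InfinitePlace ↥K, w ≠ widK K → normAtPlace w y ≤ 1 - 2*(1/4) := by
    intro w hwid
    have hwθ := pisotGen_places K hθ w hwid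
    rcases isReal_or_isComplex w with hre | hco
    · rw [normAtPlace_apply_of_isReal hre]
      have : y.1 ⟨w, hre⟩ = (mixedEmbedding ↥K θ).1 ⟨w, hre⟩ / 2 := by
        simp only [hy, if_neg hwid]
      rw [this]
      have : ‖(mixedEmbedding ↥K θ).1 ⟨w, hre⟩‖ = w θ := by
        rw [← normAtPlace_apply_of_isReal hre (mixedEmbedding ↥K θ), normAtPlace_apply]
      rw [norm_div, this]
      norm_num
      linarith
    · rw [normAtPlace_apply_of_isComplex hco]
      have : y.2 ⟨w, hco⟩ = (mixedEmbedding ↥K θ).2 ⟨w, hco⟩ / 2 := rfl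
      rw [this]
      have : ‖(mixedEmbedding ↥K θ).2 ⟨w, hco⟩‖ = w θ := by
        rw [← normAtPlace_apply_of_isComplex hco (mixedEmbedding ↥K θ), normAtPlace_apply]
      rw [norm_div, this]
      norm_num
      linarith
  obtain ⟨θ', hθ', hdist, _⟩ := hD y hcond (by rw [hyid]; have := hθ.2.1; linarith)
  rw [hyid] at hdist
  have := abs_le.mp hdist
  exact ⟨θ', hθ', by linarith [this.1], by linarith [this.2]⟩

lemma iotaK_norm (x : ↥K) : ‖iotaK K x‖ = |(x : ℝ)| := by
  rw [iotaK_apply, Complex.norm_real, Real.norm_eq_abs]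

lemma exists_consecutive :
    ∃ B : ℝ, 1 ≤ B ∧ ∀ θ ∈ pisotGen K, ∃ θ' ∈ pisotGen K,
      (θ : ℝ) < (θ' : ℝ) ∧ (θ' : ℝ) ≤ (θ : ℝ) + B ∧ (θ' - θ) ∈ CK K := by
  obtain ⟨B, hB1, hB⟩ := exists_succ_bound K
  refine ⟨B, hB1, fun θ hθ => ?_⟩
  set S : Set ↥K := {η | η ∈ pisotGen K ∧ (θ : ℝ) < (η : ℝ) ∧ (η : ℝ) ≤ (θ : ℝ) + B} with hS
  have hfin : S.Finite := by
    apply Set.Finite.subset (Embeddings.finite_of_norm_le ↥K ℂ (max ((θ : ℝ) + B) 1))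
    rintro η ⟨hη, hlt, hle⟩
    refine ⟨hη.1, fun φ => ?_⟩
    by_cases hφ : φ = iotaK K
    · rw [hφ, iotaK_norm]
      rw [abs_of_pos (by linarith [hη.2.1])]
      exact le_max_of_le_left hle
    · refine le_max_of_le_right ?_
      have := hη.2.2.2 φ hφ
      exact this.le
  have hne : S.Nonempty := by
    obtain ⟨θ', hθ', h1, h2⟩ := hB θ hθ
    exact ⟨θ', hθ', h1, h2⟩
  obtain ⟨θ', hθ'S, hmin⟩ := Set.exists_min_image S (fun η => (η : ℝ)) hfin hne
  refine ⟨θ', hθ'S.1, hθ'S.2.1, hθ'S.2.2, ?_⟩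
  refine ⟨θ, hθ, θ', hθ'S.1, hθ'S.2.1, rfl, ?_⟩
  rintro η hη ⟨h1, h2⟩
  have hηS : η ∈ S := ⟨hη, h1, by linarith [hθ'S.2.2]⟩
  have := hmin η hηS
  linarith

end pisotnear


section directions

open scoped Classical

variable (K : IntermediateField ℚ ℝ)

lemma exists_omega (w : InfinitePlace ↥K) (G : Set ↥K) (hfin : G.Finite) (h0 : (0:↥K) ∉ G) :
    ∃ ω : ℂ, ‖ω‖ = 1 ∧ (w.IsReal → ω = 1) ∧
      ∀ c ∈ G, ((starRingEnd ℂ) ω * w.embedding c).re ≠ 0 := by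
  have hz : ∀ c ∈ G, w.embedding c ≠ 0 := by
    intro c hc
    have : c ≠ 0 := fun h => h0 (h ▸ hc)
    exact fun h => this (by
      have := map_eq_zero_iff (w.embedding) ?_ |>.mp h
      · exact this
      · exact RingHom.injective _)
  by_cases hre : w.IsReal
  · refine ⟨1, by simp, fun _ => rfl, fun c hc => ?_⟩
    have him : (w.embedding c).im = 0 := by
      have h1 : ComplexEmbedding.IsReal w.embedding := isReal_iff.mp hre
      have h2 := congrFun (congrArg DFunLike.coe (ComplexEmbedding.isReal_iff.mp h1)) c
      have h3 : (starRingEnd ℂ) (w.embedding c) = w.embedding c := h2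
      rw [Complex.ext_iff] at h3
      have := h3.2
      simp only [Complex.conj_im] at this
      linarith
    have : (w.embedding c).re ≠ 0 := by
      intro h
      exact hz c hc (Complex.ext h him)
    simpa using this
  · -- complex place : choose a direction avoiding finitely many bad lines
    set T : Set ℝ := ⋃ c ∈ G, {t : ℝ | (w.embedding c).re + t * (w.embedding c).im = 0} with hT
    have hTfin : T.Finite := by
      refine Set.Finite.biUnion hfin (fun c hc => ?_)
      apply Set.Finite.subset (Set.finite_singleton
        (-(w.embedding c).re / (w.embedding c).im))
      intro t ht
      simp only [Set.mem_setOf_eq] at ht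
      by_cases him : (w.embedding c).im = 0
      · exfalso
        rw [him, mul_zero, add_zero] at ht
        exact hz c hc (Complex.ext ht him)
      · simp only [Set.mem_singleton_iff]
        field_simp
        linarith
    obtain ⟨t, ht⟩ := hTfin.infinite_compl.nonempty
    have htT : t ∉ T := ht
    set z1 : ℂ := 1 + t * Complex.I with hz1
    have hz1ne : z1 ≠ 0 := by
      intro h
      have : z1.re = 1 := by simp [hz1]
      rw [h] at this
      simp at this
    set r : ℝ := ‖z1‖⁻¹ with hr
    have hrpos : 0 < r := by
      rw [hr]
      rw [inv_pos, norm_pos_iff]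
      exact hz1ne
    refine ⟨(r : ℂ) * z1, ?_, fun h => absurd h hre, fun c hc => ?_⟩
    · rw [norm_mul, Complex.norm_real, Real.norm_eq_abs, abs_of_pos hrpos, hr]
      rw [inv_mul_cancel₀ (norm_ne_zero_iff.mpr hz1ne)]
    · have hbad : (w.embedding c).re + t * (w.embedding c).im ≠ 0 := by
        intro h
        apply htT
        rw [hT]
        exact Set.mem_biUnion hc h
      set z : ℂ := w.embedding c with hzdef
      have hcalc : (((starRingEnd ℂ) ((r:ℂ) * z1)) * z).re
          = r * (z.re + t * z.im) := by
        simp [hz1, Complex.mul_re, Complex.mul_im]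
        ring
      rw [hcalc]
      exact mul_ne_zero (ne_of_gt hrpos) hbad

end directions


open NumberField.mixedEmbedding
open scoped Classical

/-- **Corollary 3.** `C_K` has at least `2^(s+t-1)` elements, where `s` (resp. `2t`) is the
number of real (resp. non-real) embeddings of `K`; here `s + t` is the number of infinite
places of `K`. -/
theorem card_CK_ge (K : IntermediateField ℚ ℝ) [NumberField ↥K] :
    (2 ^ (Fintype.card (NumberField.InfinitePlace ↥K) - 1) : ℕ∞) ≤ (CK K).encard := by
  classical
  obtain ⟨B, hB1, hB⟩ := exists_consecutive K
  set G : Set ↥K := {x | x ≠ 0 ∧ IsIntegral ℤ x ∧ ∀ φ : ↥K →+* ℂ, ‖φ x‖ ≤ B + 2} with hGdef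
  have hGfin : G.Finite :=
    (Embeddings.finite_of_norm_le ↥K ℂ (B+2)).subset (fun x hx => ⟨hx.2.1, hx.2.2⟩)
  have h0G : (0:↥K) ∉ G := fun h => h.1 rfl
  have hω : ∀ w : {w : InfinitePlace ↥K // w ≠ widK K}, ∃ ω : ℂ, ‖ω‖ = 1 ∧
      (w.1.IsReal → ω = 1) ∧ ∀ c ∈ G, ((starRingEnd ℂ) ω * w.1.embedding c).re ≠ 0 :=
    fun w => exists_omega K w.1 G hGfin h0G
  choose ω hω1 hωr hωG using hω
  -- the minimum absolute value of the linear functionals on the candidate gap set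
  obtain ⟨δ0, hδ0pos, hδ0⟩ : ∃ δ0 : ℝ, 0 < δ0 ∧ ∀ c ∈ G,
      ∀ w : {w : InfinitePlace ↥K // w ≠ widK K},
      δ0 ≤ |((starRingEnd ℂ) (ω w) * w.1.embedding c).re| := by
    by_cases hne : (hGfin.toFinset ×ˢ
        (Finset.univ : Finset {w : InfinitePlace ↥K // w ≠ widK K})).Nonempty
    · set F : ↥K × {w : InfinitePlace ↥K // w ≠ widK K} → ℝ :=
        fun p => |((starRingEnd ℂ) (ω p.2) * p.2.1.embedding p.1).re| with hF
      refine ⟨Finset.inf' _ hne F, ?_, ?_⟩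
      · rw [Finset.lt_inf'_iff]
        rintro ⟨c, w⟩ hp
        rw [Finset.mem_product] at hp
        exact abs_pos.mpr (hωG w c (hGfin.mem_toFinset.mp hp.1))
      · intro c hc w
        exact Finset.inf'_le F (Finset.mk_mem_product
          (hGfin.mem_toFinset.mpr hc) (Finset.mem_univ _))
    · refine ⟨1, one_pos, fun c hc w => ?_⟩
      exact absurd ⟨(c, w), Finset.mk_mem_product
        (hGfin.mem_toFinset.mpr hc) (Finset.mem_univ _)⟩ hne
  set ρ : ℝ := min (1/4) (δ0/8) with hρdef
  have hρ0 : 0 < ρ := lt_min (by norm_num) (by linarith)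
  have hρ14 : ρ ≤ 1/4 := min_le_left _ _
  have h3ρ : 3 * ρ < δ0 := by
    have : ρ ≤ δ0 / 8 := min_le_right _ _
    linarith
  obtain ⟨D, hD1, hD⟩ := exists_pisot_near K hρ0 hρ14
  have hcne : ∀ wc : {w : InfinitePlace ↥K // IsComplex w}, (wc : InfinitePlace ↥K) ≠ widK K :=
    fun wc h => (not_isReal_iff_isComplex.mpr wc.2) (h ▸ widK_isReal K)
  -- main claim : each sign pattern is realized by an element of CK
  have main : ∀ ε : {w : InfinitePlace ↥K // w ≠ widK K} → Bool, ∃ c ∈ CK K,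
      ∀ w : {w : InfinitePlace ↥K // w ≠ widK K},
        (ε w = true → ((starRingEnd ℂ) (ω w) * w.1.embedding c).re < 0) ∧
        (ε w = false → 0 < ((starRingEnd ℂ) (ω w) * w.1.embedding c).re) := by
    intro ε
    set sgn : {w : InfinitePlace ↥K // w ≠ widK K} → ℝ :=
      fun w => if ε w then 1 else -1 with hsgn
    have hsgn1 : ∀ w, |sgn w| = 1 := by
      intro w
      rw [hsgn]
      by_cases h : ε w <;> simp [h]
    set y : mixedSpace ↥K :=
      (fun wr => if h : (wr : InfinitePlace ↥K) = widK K then D + 2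
        else sgn ⟨wr.1, h⟩ * (1 - 2*ρ),
       fun wc => (↑(sgn ⟨wc.1, hcne wc⟩ * (1 - 2*ρ)) : ℂ) * ω ⟨wc.1, hcne wc⟩) with hy
    have hyid : y.1 ⟨widK K, widK_isReal K⟩ = D + 2 := by
      simp only [hy]
      simp
    have h2ρ : 0 ≤ 1 - 2*ρ := by linarith
    have hycond : ∀ w : InfinitePlace ↥K, w ≠ widK K → normAtPlace w y ≤ 1 - 2*ρ := by
      intro w hw
      rcases isReal_or_isComplex w with hre | hco
      · rw [normAtPlace_apply_of_isReal hre]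
        have : y.1 ⟨w, hre⟩ = sgn ⟨w, hw⟩ * (1 - 2*ρ) := by
          simp only [hy]
          rw [dif_neg hw]
        rw [this, Real.norm_eq_abs, abs_mul, hsgn1, one_mul, abs_of_nonneg h2ρ]
      · rw [normAtPlace_apply_of_isComplex hco]
        have : y.2 ⟨w, hco⟩ = (↑(sgn ⟨w, hw⟩ * (1 - 2*ρ)) : ℂ) * ω ⟨w, hw⟩ := rfl
        rw [this, norm_mul, Complex.norm_real, hω1, mul_one, Real.norm_eq_abs, abs_mul,
          hsgn1, one_mul, abs_of_nonneg h2ρ]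
    obtain ⟨θ, hθ, hdist, hcoord⟩ := hD y hycond (le_of_eq hyid.symm)
    obtain ⟨θ', hθ', hlt, hle, hCK⟩ := hB θ hθ
    have hcG : (θ' - θ) ∈ G := by
      refine ⟨?_, hθ'.1.sub hθ.1, ?_⟩
      · intro h
        rw [sub_eq_zero] at h
        rw [h] at hlt
        exact lt_irrefl _ hlt
      · intro φ
        by_cases hφ : φ = iotaK K
        · rw [hφ, iotaK_norm]
          have : ((θ' - θ : ↥K) : ℝ) = (θ' : ℝ) - (θ : ℝ) := by push_cast; ring
          rw [this, abs_of_pos (by linarith)]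
          linarith
        · rw [map_sub]
          have h1 : ‖φ θ'‖ < 1 := by
            have := hθ'.2.2.2 φ hφ
            exact this
          have h2 : ‖φ θ‖ < 1 := by
            have := hθ.2.2.2 φ hφ
            exact this
          calc ‖φ θ' - φ θ‖ ≤ ‖φ θ'‖ + ‖φ θ‖ := norm_sub_le _ _
            _ ≤ B + 2 := by linarith
    refine ⟨θ' - θ, hCK, fun w => ?_⟩
    set Ω : ℂ := ω w with hΩdef
    have hΩ : ‖Ω‖ = 1 := hω1 w
    set z : ℂ := w.1.embedding θ with hzdef
    set z' : ℂ := w.1.embedding θ' with hz'def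
    have habs : ∀ v : ℂ, |((starRingEnd ℂ) Ω * v).re| ≤ ‖v‖ := by
      intro v
      calc |((starRingEnd ℂ) Ω * v).re| ≤ ‖(starRingEnd ℂ) Ω * v‖ := Complex.abs_re_le_norm _
        _ = ‖Ω‖ * ‖v‖ := by rw [norm_mul, Complex.norm_conj]
        _ = ‖v‖ := by rw [hΩ, one_mul]
    have hz'lt : |((starRingEnd ℂ) Ω * z').re| < 1 := by
      refine lt_of_le_of_lt (habs z') ?_
      rw [hz'def, norm_embedding_eq]
      exact pisotGen_places K hθ' w.1 w.2
    -- the coordinate of θ is ρ-close to the target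
    have hzy : ‖z - (↑(sgn w * (1 - 2*ρ)) : ℂ) * Ω‖ ≤ ρ := by
      have hc := hcoord w.1 w.2
      rcases isReal_or_isComplex w.1 with hre | hco
      · rw [normAtPlace_apply_of_isReal hre] at hc
        have hΩ1 : Ω = 1 := hωr w hre
        have hy1 : y.1 ⟨w.1, hre⟩ = sgn w * (1 - 2*ρ) := by
          simp only [hy]
          rw [dif_neg w.2]
        have hmix : ((mixedEmbedding ↥K θ - y).1 ⟨w.1, hre⟩ : ℝ) =
            (embedding_of_isReal hre θ : ℝ) - sgn w * (1 - 2*ρ) := by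
          rw [Prod.fst_sub, Pi.sub_apply, hy1, mixedEmbedding_apply_isReal]
        rw [hmix] at hc
        have hzre : z = ((embedding_of_isReal hre θ : ℝ) : ℂ) := by
          rw [hzdef, ← embedding_of_isReal_apply hre]
        rw [hzre, hΩ1, mul_one]
        rw [show (((embedding_of_isReal hre θ : ℝ)) : ℂ) - (↑(sgn w * (1 - 2*ρ)) : ℂ) =
          (((embedding_of_isReal hre θ : ℝ) - sgn w * (1 - 2*ρ) : ℝ) : ℂ) by push_cast; ring]
        rw [Complex.norm_real, Real.norm_eq_abs]
        exact hc
      · rw [normAtPlace_apply_of_isComplex hco] at hc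
        have hy2 : y.2 ⟨w.1, hco⟩ = (↑(sgn w * (1 - 2*ρ)) : ℂ) * Ω := by
          have hsub : (⟨(⟨w.1, hco⟩ : {v : InfinitePlace ↥K // IsComplex v}).1,
              hcne ⟨w.1, hco⟩⟩ : {v : InfinitePlace ↥K // v ≠ widK K}) = w := by
            apply Subtype.ext
            rfl
          show (↑(sgn ⟨w.1, hcne ⟨w.1, hco⟩⟩ * (1 - 2*ρ)) : ℂ) * ω ⟨w.1, hcne ⟨w.1, hco⟩⟩ = _
          rw [show (⟨w.1, hcne ⟨w.1, hco⟩⟩ : {v : InfinitePlace ↥K // v ≠ widK K}) = w from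
            Subtype.ext rfl]
        have hmix : (mixedEmbedding ↥K θ - y).2 ⟨w.1, hco⟩ =
            z - (↑(sgn w * (1 - 2*ρ)) : ℂ) * Ω := by
          rw [Prod.snd_sub, Pi.sub_apply, hy2, mixedEmbedding_apply_isComplex]
        rw [hmix] at hc
        exact hc
    have hLy : ((starRingEnd ℂ) Ω * ((↑(sgn w * (1 - 2*ρ)) : ℂ) * Ω)).re
        = sgn w * (1 - 2*ρ) := by
      have h1 : (starRingEnd ℂ) Ω * ((↑(sgn w * (1 - 2*ρ)) : ℂ) * Ω)
          = (↑(sgn w * (1 - 2*ρ)) : ℂ) * ((starRingEnd ℂ) Ω * Ω) := by ring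
      have h2 : (starRingEnd ℂ) Ω * Ω = ((‖Ω‖ ^ 2 : ℝ) : ℂ) := by
        rw [mul_comm, Complex.mul_conj, Complex.normSq_eq_norm_sq]
      rw [h1, h2, ← Complex.ofReal_mul, Complex.ofReal_re, hΩ]
      norm_num
    have hLz : |((starRingEnd ℂ) Ω * z).re - sgn w * (1 - 2*ρ)| ≤ ρ := by
      have h1 : ((starRingEnd ℂ) Ω * z).re - sgn w * (1 - 2*ρ)
          = ((starRingEnd ℂ) Ω * (z - (↑(sgn w * (1 - 2*ρ)) : ℂ) * Ω)).re := by
        rw [show (starRingEnd ℂ) Ω * (z - (↑(sgn w * (1 - 2*ρ)) : ℂ) * Ω)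
          = (starRingEnd ℂ) Ω * z - (starRingEnd ℂ) Ω * ((↑(sgn w * (1 - 2*ρ)) : ℂ) * Ω)
          from by ring, Complex.sub_re, hLy]
      rw [h1]
      exact le_trans (habs _) hzy
    have hLc : ((starRingEnd ℂ) Ω * w.1.embedding (θ' - θ)).re
        = ((starRingEnd ℂ) Ω * z').re - ((starRingEnd ℂ) Ω * z).re := by
      rw [map_sub, mul_sub, Complex.sub_re]
    have hδle : δ0 ≤ |((starRingEnd ℂ) Ω * w.1.embedding (θ' - θ)).re| := hδ0 _ hcG w
    have habs1 := abs_le.mp hLz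
    have habs2 := abs_lt.mp hz'lt
    constructor
    · intro hεt
      have hsgnw : sgn w = 1 := by rw [hsgn]; simp [hεt]
      rw [hsgnw, one_mul] at habs1
      by_contra hge
      push_neg at hge
      rw [hLc] at hge hδle
      rw [abs_of_nonneg hge] at hδle
      linarith [habs1.1, habs2.2]
    · intro hεf
      have hsgnw : sgn w = -1 := by rw [hsgn]; simp [hεf]
      rw [hsgnw] at habs1
      by_contra hge
      push_neg at hge
      rw [hLc] at hge hδle
      rw [abs_of_nonpos hge] at hδle
      linarith [habs1.2, habs2.1]
  -- extract the injection and count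
  choose f hfCK hfsign using main
  have hinj : Function.Injective f := by
    intro ε ε' h
    funext w
    by_contra hne
    rcases Bool.eq_false_or_eq_true (ε w) with h1 | h1
    · have h2 : ε' w = false := by
        cases hb : ε' w
        · rfl
        · exact absurd (h1.trans hb.symm) hne
      have ha := (hfsign ε w).1 h1
      have hb := (hfsign ε' w).2 h2
      rw [h] at ha
      linarith
    · have h2 : ε' w = true := by
        cases hb : ε' w
        · exact absurd (h1.trans hb.symm) hne
        · rfl
      have ha := (hfsign ε w).2 h1
      have hb := (hfsign ε' w).1 h2
      rw [h] at ha
      linarith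
  have hsub : Set.range f ⊆ CK K := by
    rintro _ ⟨ε, rfl⟩
    exact hfCK ε
  have hcardP : Fintype.card {w : InfinitePlace ↥K // w ≠ widK K}
      = Fintype.card (InfinitePlace ↥K) - 1 := by
    have h1 : Fintype.card {w : InfinitePlace ↥K // w ≠ widK K}
        = Fintype.card {w : InfinitePlace ↥K // ¬ (w = widK K)} :=
      Fintype.card_congr (Equiv.subtypeEquivRight (fun _ => Iff.rfl))
    rw [h1, Fintype.card_subtype_compl, Fintype.card_subtype_eq]
  calc (2 ^ (Fintype.card (NumberField.InfinitePlace ↥K) - 1) : ℕ∞)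
      = ((Fintype.card ({w : InfinitePlace ↥K // w ≠ widK K} → Bool) : ℕ) : ℕ∞) := by
        rw [Fintype.card_fun, Fintype.card_bool, hcardP]
        push_cast
        rfl
    _ = (Set.univ : Set ({w : InfinitePlace ↥K // w ≠ widK K} → Bool)).encard := by
        rw [Set.encard_univ]
        exact (ENat.card_eq_coe_fintype_card).symm
    _ = (f '' Set.univ).encard := (Set.InjOn.encard_image (hinj.injOn)).symm
    _ = (Set.range f).encard := by rw [Set.image_univ]
    _ ≤ (CK K).encard := Set.encard_mono hsub
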